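/- Let R = k[x,y,z]/(z^2 - xy) over a field k of characteristic 0. Then Ω^3_{R/k} is isomorphic to k as an R-module (where R acts through the augmentation R → k killing x, y, z), generated by dx∧dy∧dz. -/

import Mathlib

open MvPolynomial

set_option maxHeartbeats 1000000
set_option synthInstance.maxHeartbeats 100000

/-- The ideal `(z² - xy)` in `k[x,y,z]` (variables `X 0, X 1, X 2`). -/
noncomputable def conicIdeal (k : Type) [Field k] : Ideal (MvPolynomial (Fin 3) k) :=
  Ideal.span {(X 2 : MvPolynomial (Fin 3) k) ^ 2 - X 0 * X 1}

/-- The homogeneous coordinate ring `R = k[x,y,z]/(z² - xy)` of the plane conic. -/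
abbrev ConicRing (k : Type) [Field k] : Type := MvPolynomial (Fin 3) k ⧸ conicIdeal k

/-- The image of `X i` in `R = k[x,y,z]/(z² - xy)`. -/
noncomputable def conicVar (k : Type) [Field k] (i : Fin 3) : ConicRing k :=
  Ideal.Quotient.mk (conicIdeal k) (X i)

/-- `d(X i)` viewed inside the exterior algebra of `Ω¹_{R/k}` over `R`. -/
noncomputable def conicDVar (k : Type) [Field k] (i : Fin 3) :
    ExteriorAlgebra (ConicRing k) (Ω[ConicRing k⁄k]) :=
  ExteriorAlgebra.ι (ConicRing k)
    ((KaehlerDifferential.D k (ConicRing k)) (conicVar k i))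

section ConicAux

variable (k : Type) [Field k]

instance conicEA_smulCommClass : SMulCommClass (ConicRing k) (ExteriorAlgebra (ConicRing k) Ω[ConicRing k⁄k])
    (ExteriorAlgebra (ConicRing k) Ω[ConicRing k⁄k]) := by
  exact Algebra.to_smulCommClass (R := ConicRing k) (A := ExteriorAlgebra (ConicRing k) Ω[ConicRing k⁄k])

instance conicEA_isScalarTower : IsScalarTower (ConicRing k) (ExteriorAlgebra (ConicRing k) Ω[ConicRing k⁄k])
    (ExteriorAlgebra (ConicRing k) Ω[ConicRing k⁄k]) := by
  exact IsScalarTower.right (R := ConicRing k) (A := ExteriorAlgebra (ConicRing k) Ω[ConicRing k⁄k])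

lemma conic_rel : conicVar k 2 * conicVar k 2 = conicVar k 0 * conicVar k 1 := by
  have h : Ideal.Quotient.mk (conicIdeal k) ((X 2 : MvPolynomial (Fin 3) k) ^ 2 - X 0 * X 1) = 0 :=
    Ideal.Quotient.eq_zero_iff_mem.2 (Ideal.subset_span rfl)
  rw [map_sub, map_pow, map_mul, sub_eq_zero] at h
  simpa [conicVar, pow_two] using h

-- Ω¹ is spanned by the three d(X i)

lemma span_d (m : Ω[ConicRing k⁄k]) :
    m ∈ Submodule.span (ConicRing k)
      {(KaehlerDifferential.D k (ConicRing k)) (conicVar k 0),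
       (KaehlerDifferential.D k (ConicRing k)) (conicVar k 1),
       (KaehlerDifferential.D k (ConicRing k)) (conicVar k 2)} := by
  set S := Submodule.span (ConicRing k)
      {(KaehlerDifferential.D k (ConicRing k)) (conicVar k 0),
       (KaehlerDifferential.D k (ConicRing k)) (conicVar k 1),
       (KaehlerDifferential.D k (ConicRing k)) (conicVar k 2)} with hS
  have key : ∀ r : ConicRing k, (KaehlerDifferential.D k (ConicRing k)) r ∈ S := by
    intro r
    obtain ⟨p, rfl⟩ := Ideal.Quotient.mk_surjective r
    induction p using MvPolynomial.induction_on with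
    | C a =>
        have : (Ideal.Quotient.mk (conicIdeal k)) (C a) = algebraMap k (ConicRing k) a := rfl
        rw [this, Derivation.map_algebraMap]
        exact S.zero_mem
    | add p q hp hq =>
        rw [map_add, map_add]
        exact S.add_mem hp hq
    | mul_X p i hp =>
        rw [map_mul, Derivation.leibniz]
        refine S.add_mem (S.smul_mem _ ?_) (S.smul_mem _ hp)
        have : (Ideal.Quotient.mk (conicIdeal k)) (X i) = conicVar k i := rfl
        rw [this]
        fin_cases i <;> exact Submodule.subset_span (by simp)
  have : m ∈ Submodule.span (ConicRing k) (Set.range (KaehlerDifferential.D k (ConicRing k))) := by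
    rw [KaehlerDifferential.span_range_derivation]; trivial
  refine Submodule.span_le.2 ?_ this
  rintro _ ⟨r, rfl⟩
  exact key r

lemma d_rel :
    conicVar k 2 • (KaehlerDifferential.D k (ConicRing k)) (conicVar k 2)
      + conicVar k 2 • (KaehlerDifferential.D k (ConicRing k)) (conicVar k 2)
    = conicVar k 0 • (KaehlerDifferential.D k (ConicRing k)) (conicVar k 1)
      + conicVar k 1 • (KaehlerDifferential.D k (ConicRing k)) (conicVar k 0) := by
  have := congrArg (KaehlerDifferential.D k (ConicRing k)) (conic_rel k)
  rwa [Derivation.leibniz, Derivation.leibniz] at this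

lemma ann (i : Fin 3) [CharZero k] :
    conicVar k i • (conicDVar k 0 * conicDVar k 1 * conicDVar k 2) = 0 := by
  set x := conicVar k 0; set y := conicVar k 1; set z := conicVar k 2
  set ι' := ExteriorAlgebra.ι (ConicRing k) (M := Ω[ConicRing k⁄k]) with hι
  set a : Fin 3 → Ω[ConicRing k⁄k] := fun j => (KaehlerDifferential.D k (ConicRing k)) (conicVar k j) with ha
  have hu : ∀ j, conicDVar k j = ι' (a j) := fun j => rfl
  set u : Fin 3 → ExteriorAlgebra (ConicRing k) (Ω[ConicRing k⁄k]) := fun j => ι' (a j) with hu'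
  have sq : ∀ j, u j * u j = 0 := fun j => ExteriorAlgebra.ι_sq_zero (a j)
  have rel : ι' (z • a 2) + ι' (z • a 2) = ι' (x • a 1) + ι' (y • a 0) := by
    rw [← map_add, ← map_add, d_rel k]
  -- expand: z • u 2 + z • u 2 = x • u 1 + y • u 0
  have rel' : z • u 2 + z • u 2 = x • u 1 + y • u 0 := by
    simpa only [map_smul] using rel
  rw [hu, hu, hu]
  fin_cases i
  · -- x • ω : u0 * rel * u2
    have h := congrArg (fun t => u 0 * t * u 2) rel'
    simp only [mul_add, add_mul, mul_smul_comm, smul_mul_assoc] at h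
    -- LHS: z•(u0*u2*u2) + z•(u0*u2*u2) ; RHS: x•(u0*u1*u2) + y•(u0*u0*u2)
    rw [mul_assoc (u 0) (u 2) (u 2), sq, mul_zero, smul_zero] at h
    rw [show u 0 * u 0 * u 2 = 0 by rw [sq, zero_mul], smul_zero, add_zero, add_zero] at h
    exact h.symm
  · -- y • ω : rel * u1 * u2
    have h := congrArg (fun t => t * u 1 * u 2) rel'
    simp only [mul_add, add_mul, mul_smul_comm, smul_mul_assoc] at h
    have h212 : u 2 * u 1 * u 2 = 0 := by
      have hsw : u 2 * u 1 = -(u 1 * u 2) :=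
        eq_neg_of_add_eq_zero_left (ExteriorAlgebra.ι_add_mul_swap (a 2) (a 1))
      rw [hsw, neg_mul, mul_assoc, sq, mul_zero, neg_zero]
    rw [h212, smul_zero, add_zero] at h
    rw [show u 1 * u 1 * u 2 = 0 by rw [sq, zero_mul], smul_zero, zero_add] at h
    exact h.symm
  · -- z • ω : u0 * u1 * rel gives 2 z ω = 0, then divide by 2
    have h := congrArg (fun t => u 0 * u 1 * t) rel'
    simp only [mul_add, mul_smul_comm] at h
    have h010 : u 0 * u 1 * u 0 = 0 := by
      have hsw : u 1 * u 0 = -(u 0 * u 1) :=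
        eq_neg_of_add_eq_zero_left (ExteriorAlgebra.ι_add_mul_swap (a 1) (a 0))
      rw [mul_assoc, hsw, mul_neg, ← mul_assoc, sq, zero_mul, neg_zero]
    rw [show u 0 * u 1 * u 1 = 0 by rw [mul_assoc, sq, mul_zero], smul_zero, zero_add,
      h010, smul_zero] at h
    -- h : z • (u0*u1*u2) + z • (u0*u1*u2) = 0
    have h2 : (2 : ConicRing k) • (z • (u 0 * u 1 * u 2)) = 0 := by
      exact (two_smul (ConicRing k) _).trans h
    have htwo : (algebraMap k (ConicRing k) (2⁻¹ : k)) * 2 = 1 := by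
      rw [show (2 : ConicRing k) = algebraMap k (ConicRing k) 2 from (map_ofNat _ 2).symm,
        ← map_mul]
      norm_num
    calc z • (u 0 * u 1 * u 2)
        = ((algebraMap k (ConicRing k) (2⁻¹ : k)) * 2) • (z • (u 0 * u 1 * u 2)) := by
          rw [htwo]; exact (one_smul (ConicRing k) (z • (u 0 * u 1 * u 2))).symm
      _ = (algebraMap k (ConicRing k) (2⁻¹ : k)) • ((2 : ConicRing k) • (z • (u 0 * u 1 * u 2))) := by
          exact mul_smul (algebraMap k (ConicRing k) (2⁻¹ : k)) (2 : ConicRing k) (z • (u 0 * u 1 * u 2))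
      _ = 0 := by rw [h2, smul_zero]

lemma mem_pow3 : conicDVar k 0 * conicDVar k 1 * conicDVar k 2
    ∈ ⋀[ConicRing k]^3 (Ω[ConicRing k⁄k]) := by
  have h : ∀ j, conicDVar k j ∈ LinearMap.range (ExteriorAlgebra.ι (ConicRing k)
      (M := Ω[ConicRing k⁄k])) := fun j => ⟨_, rfl⟩
  show _ ∈ LinearMap.range (ExteriorAlgebra.ι (ConicRing k) (M := Ω[ConicRing k⁄k])) ^ 3
  rw [pow_succ, pow_succ, pow_one]
  exact Submodule.mul_mem_mul (Submodule.mul_mem_mul (h 0) (h 1)) (h 2)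

lemma span3 : ⋀[ConicRing k]^3 (Ω[ConicRing k⁄k]) ≤
    Submodule.span (ConicRing k) {conicDVar k 0 * conicDVar k 1 * conicDVar k 2} := by
  set ι' := ExteriorAlgebra.ι (ConicRing k) (M := Ω[ConicRing k⁄k]) with hι
  set a : Fin 3 → Ω[ConicRing k⁄k] :=
    fun j => (KaehlerDifferential.D k (ConicRing k)) (conicVar k j) with ha
  set u : Fin 3 → ExteriorAlgebra (ConicRing k) (Ω[ConicRing k⁄k]) := fun j => ι' (a j) with hu'
  set S := Submodule.span (ConicRing k) {conicDVar k 0 * conicDVar k 1 * conicDVar k 2} with hS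
  have hω : u 0 * u 1 * u 2 ∈ S := Submodule.mem_span_singleton_self _
  have sq : ∀ j, u j * u j = 0 := fun j => ExteriorAlgebra.ι_sq_zero (a j)
  have s10 : u 1 * u 0 = -(u 0 * u 1) :=
    eq_neg_of_add_eq_zero_left (ExteriorAlgebra.ι_add_mul_swap (a 1) (a 0))
  have s20 : u 2 * u 0 = -(u 0 * u 2) :=
    eq_neg_of_add_eq_zero_left (ExteriorAlgebra.ι_add_mul_swap (a 2) (a 0))
  have s21 : u 2 * u 1 = -(u 1 * u 2) :=
    eq_neg_of_add_eq_zero_left (ExteriorAlgebra.ι_add_mul_swap (a 2) (a 1))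
  have t10 : ∀ w, w * u 1 * u 0 = -(w * u 0 * u 1) := fun w => by
    rw [mul_assoc, s10, mul_neg, mul_assoc]
  have t20 : ∀ w, w * u 2 * u 0 = -(w * u 0 * u 2) := fun w => by
    rw [mul_assoc, s20, mul_neg, mul_assoc]
  have t21 : ∀ w, w * u 2 * u 1 = -(w * u 1 * u 2) := fun w => by
    rw [mul_assoc, s21, mul_neg, mul_assoc]
  have tsq : ∀ j w, w * u j * u j = 0 := fun j w => by rw [mul_assoc, sq, mul_zero]
  have m0 : ∀ (h : 0 < 3), (⟨0, h⟩ : Fin 3) = 0 := fun _ => rfl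
  have m1 : ∀ (h : 1 < 3), (⟨1, h⟩ : Fin 3) = 1 := fun _ => rfl
  have m2 : ∀ (h : 2 < 3), (⟨2, h⟩ : Fin 3) = 2 := fun _ => rfl
  have tri : ∀ i j l : Fin 3, u i * u j * u l ∈ S := by
    intro i j l
    fin_cases i <;> fin_cases j <;> fin_cases l <;>
      simp only [m0, m1, m2, sq, s10, s20, s21, t10, t20, t21, tsq, neg_mul, mul_neg,
        neg_neg, zero_mul, mul_zero, neg_zero] <;>
      first
        | exact hω
        | exact S.neg_mem hω
        | exact S.zero_mem
  have exgen : ∀ x : Ω[ConicRing k⁄k], x ∈ ({a 0, a 1, a 2} : Set _) → ∃ i, x = a i := by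
    intro x hx
    rcases hx with h | h | h
    exacts [⟨0, h⟩, ⟨1, h⟩, ⟨2, h⟩]
  have key : ∀ x y z : Ω[ConicRing k⁄k], ι' x * ι' y * ι' z ∈ S := by
    intro x y z
    refine Submodule.span_induction (p := fun x _ => ∀ y z : Ω[ConicRing k⁄k],
        ι' x * ι' y * ι' z ∈ S) ?_ ?_ ?_ ?_ (span_d k x) y z
    · intro x hx
      obtain ⟨i, rfl⟩ := exgen x hx
      intro y z
      refine Submodule.span_induction (p := fun y _ => ∀ z : Ω[ConicRing k⁄k],
          ι' (a i) * ι' y * ι' z ∈ S) ?_ ?_ ?_ ?_ (span_d k y) z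
      · intro y hy
        obtain ⟨j, rfl⟩ := exgen y hy
        intro z
        refine Submodule.span_induction (p := fun z _ => ι' (a i) * ι' (a j) * ι' z ∈ S)
          ?_ ?_ ?_ ?_ (span_d k z)
        · intro z hz
          obtain ⟨l, rfl⟩ := exgen z hz
          exact tri i j l
        · rw [map_zero, mul_zero]; exact S.zero_mem
        · intro p q _ _ hp hq
          rw [map_add, mul_add]; exact S.add_mem hp hq
        · intro r p _ hp
          rw [map_smul, mul_smul_comm]; exact S.smul_mem _ hp
      · intro z
        rw [map_zero, mul_zero, zero_mul]; exact S.zero_mem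
      · intro p q _ _ hp hq z
        rw [map_add, mul_add, add_mul]; exact S.add_mem (hp z) (hq z)
      · intro r p _ hp z
        rw [map_smul, mul_smul_comm, smul_mul_assoc]; exact S.smul_mem _ (hp z)
    · intro y z
      rw [map_zero, zero_mul, zero_mul]; exact S.zero_mem
    · intro p q _ _ hp hq y z
      rw [map_add, add_mul, add_mul]; exact S.add_mem (hp y z) (hq y z)
    · intro r p _ hp y z
      rw [map_smul, smul_mul_assoc, smul_mul_assoc]; exact S.smul_mem _ (hp y z)
  rw [← ExteriorAlgebra.ιMulti_span_fixedDegree, Submodule.span_le]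
  rintro _ ⟨v, rfl⟩
  have hm : ExteriorAlgebra.ιMulti (ConicRing k) 3 v = ι' (v 0) * ι' (v 1) * ι' (v 2) := by
    rw [ExteriorAlgebra.ιMulti_apply]
    simp [List.ofFn_succ, mul_assoc]
    rfl
  rw [hm]
  exact key _ _ _

open TrivSqZeroExt in
lemma exists_functional (ε : ConicRing k →ₐ[k] k)
    (hε : ε (conicVar k 0) = 0 ∧ ε (conicVar k 1) = 0 ∧ ε (conicVar k 2) = 0) :
    ∃ Φ : ExteriorAlgebra (ConicRing k) (Ω[ConicRing k⁄k]) →+ k,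
      (∀ (r : ConicRing k) (x : ExteriorAlgebra (ConicRing k) (Ω[ConicRing k⁄k])),
        Φ (r • x) = ε r * Φ x) ∧
      Φ (conicDVar k 0 * conicDVar k 1 * conicDVar k 2) = 1 := by
  have hεi : ∀ i : Fin 3, ε (conicVar k i) = 0 := by
    intro i; fin_cases i; exacts [hε.1, hε.2.1, hε.2.2]
  letI modV : Module (ConicRing k) (Fin 3 → k) := Module.compHom _ ε.toRingHom
  letI modk : Module (ConicRing k) k := Module.compHom _ ε.toRingHom
  haveI towV : IsScalarTower k (ConicRing k) (Fin 3 → k) := by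
    constructor
    intro c r v
    show ε (c • r) • v = c • (ε r • v)
    rw [show (c • r : ConicRing k) = algebraMap k _ c * r from Algebra.smul_def c r,
      map_mul, ε.commutes, mul_smul, Algebra.algebraMap_self_apply]
  haveI towk2 : IsScalarTower (ConicRing k) k (Fin 3 → k) := by
    constructor
    intro r c v
    show (ε r * c) • v = ε r • c • v
    rw [mul_smul]
  haveI towkk : IsScalarTower (ConicRing k) k k := by
    constructor
    intro r c c'
    show (ε r * c) • c' = ε r • c • c'
    rw [mul_smul]
  -- the algebra map to the trivial square-zero extension
  have hker : ∀ p ∈ conicIdeal k,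
      (aeval fun i : Fin 3 => (inr (Pi.single i (1:k)) : TrivSqZeroExt k (Fin 3 → k))) p = 0 := by
    intro p hp
    obtain ⟨t, rfl⟩ := Ideal.mem_span_singleton'.1 hp
    rw [map_mul]
    have : (aeval fun i : Fin 3 => (inr (Pi.single i (1:k)) : TrivSqZeroExt k (Fin 3 → k)))
        ((X 2 : MvPolynomial (Fin 3) k) ^ 2 - X 0 * X 1) = 0 := by
      rw [map_sub, map_pow, map_mul, aeval_X, aeval_X, aeval_X, pow_two,
        inr_mul_inr, inr_mul_inr, sub_zero]
    rw [this, mul_zero]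
  let g : ConicRing k →ₐ[k] TrivSqZeroExt k (Fin 3 → k) :=
    Ideal.Quotient.liftₐ _ (aeval fun i : Fin 3 => (inr (Pi.single i (1:k)) :
      TrivSqZeroExt k (Fin 3 → k))) hker
  have hg : ∀ i, g (conicVar k i) = inr (Pi.single i (1:k)) := by
    intro i
    show g (Ideal.Quotient.mk (conicIdeal k) (X i)) = _
    rw [Ideal.Quotient.liftₐ_apply]
    exact aeval_X _ i
  have hfst : ∀ r, fst (g r) = ε r := by
    have : (TrivSqZeroExt.fstHom k k (Fin 3 → k)).comp g = ε := by
      apply Ideal.Quotient.algHom_ext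
      apply MvPolynomial.algHom_ext
      intro i
      show fst (g (conicVar k i)) = ε (conicVar k i)
      rw [hg, fst_inr, hεi]
    intro r
    exact congrArg (fun f => f r) congr(($this : _ →ₐ[k] k).toFun) |>.trans rfl
  -- the derivation
  let δ : Derivation k (ConicRing k) (Fin 3 → k) :=
    { toLinearMap := (TrivSqZeroExt.sndHom k (Fin 3 → k)).comp g.toLinearMap
      map_one_eq_zero' := by simp
      leibniz' := by
        intro a b
        show snd (g (a * b)) = a • snd (g b) + b • snd (g a)
        rw [map_mul, snd_mul, hfst, hfst, op_smul_eq_smul]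
        rfl }
  have hδ : ∀ i, δ (conicVar k i) = Pi.single i (1:k) := by
    intro i
    show snd (g (conicVar k i)) = _
    rw [hg, snd_inr]
  let L : Ω[ConicRing k⁄k] →ₗ[ConicRing k] (Fin 3 → k) := δ.liftKaehlerDifferential
  have hL : ∀ i, L ((KaehlerDifferential.D k (ConicRing k)) (conicVar k i))
      = Pi.single i (1:k) := by
    intro i
    rw [show L ((KaehlerDifferential.D k (ConicRing k)) (conicVar k i)) = δ (conicVar k i) from
      Derivation.liftKaehlerDifferential_comp_D δ _, hδ]
  -- the determinant alternating map, over ConicRing k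
  let FV : (Fin 3 → k) [⋀^Fin 3]→ₗ[ConicRing k] k :=
    { toMultilinearMap :=
        ((Matrix.detRowAlternating : (Fin 3 → k) [⋀^Fin 3]→ₗ[k] k) :
          MultilinearMap k (fun _ : Fin 3 => Fin 3 → k) k).restrictScalars (ConicRing k)
      map_eq_zero_of_eq' := fun v i j h hij =>
        (Matrix.detRowAlternating : (Fin 3 → k) [⋀^Fin 3]→ₗ[k] k).map_eq_zero_of_eq v h hij }
  let F : (Ω[ConicRing k⁄k]) [⋀^Fin 3]→ₗ[ConicRing k] k := FV.compLinearMap L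
  let f : ∀ i : ℕ, (Ω[ConicRing k⁄k]) [⋀^Fin i]→ₗ[ConicRing k] k := fun i =>
    match i with
    | 3 => F
    | _ => 0
  let Φ : ExteriorAlgebra (ConicRing k) (Ω[ConicRing k⁄k]) →ₗ[ConicRing k] k :=
    ExteriorAlgebra.liftAlternating f
  refine ⟨Φ.toAddMonoidHom, ?_, ?_⟩
  · intro r x
    show Φ (r • x) = ε r * Φ x
    rw [map_smul]
    rfl
  · show Φ (conicDVar k 0 * conicDVar k 1 * conicDVar k 2) = 1
    have hm : conicDVar k 0 * conicDVar k 1 * conicDVar k 2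
        = ExteriorAlgebra.ιMulti (ConicRing k) 3
          ![(KaehlerDifferential.D k (ConicRing k)) (conicVar k 0),
            (KaehlerDifferential.D k (ConicRing k)) (conicVar k 1),
            (KaehlerDifferential.D k (ConicRing k)) (conicVar k 2)] := by
      rw [ExteriorAlgebra.ιMulti_apply]
      simp [conicDVar, List.ofFn_succ, mul_assoc]
    rw [hm]
    rw [show Φ = ExteriorAlgebra.liftAlternating f from rfl,
      ExteriorAlgebra.liftAlternating_apply_ιMulti]
    show F _ = 1
    rw [show F ![(KaehlerDifferential.D k (ConicRing k)) (conicVar k 0),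
            (KaehlerDifferential.D k (ConicRing k)) (conicVar k 1),
            (KaehlerDifferential.D k (ConicRing k)) (conicVar k 2)]
        = FV ![Pi.single 0 1, Pi.single 1 1, Pi.single 2 1] from ?_]
    · show Matrix.det (Matrix.of ![Pi.single 0 1, Pi.single 1 1, Pi.single 2 1]) = 1
      simp [Matrix.det_fin_three, Pi.single_apply]
    · show FV (L ∘ _) = FV _
      congr 1
      funext i
      show L (![(KaehlerDifferential.D k (ConicRing k)) (conicVar k 0),
            (KaehlerDifferential.D k (ConicRing k)) (conicVar k 1),
            (KaehlerDifferential.D k (ConicRing k)) (conicVar k 2)] i) = _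
      have m0 : ∀ (h : 0 < 3), (⟨0, h⟩ : Fin 3) = 0 := fun _ => rfl
      have m1 : ∀ (h : 1 < 3), (⟨1, h⟩ : Fin 3) = 1 := fun _ => rfl
      have m2 : ∀ (h : 2 < 3), (⟨2, h⟩ : Fin 3) = 2 := fun _ => rfl
      fin_cases i <;> simp only [m0, m1, m2, Matrix.cons_val_zero, Matrix.cons_val_one,
        Matrix.head_cons, Matrix.cons_val_two, Matrix.tail_cons, hL]

lemma eps_ker (ε : ConicRing k →ₐ[k] k)
    (hεi : ∀ i : Fin 3, ε (conicVar k i) = 0) (r : ConicRing k) :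
    r - algebraMap k (ConicRing k) (ε r) ∈
      Ideal.span {conicVar k 0, conicVar k 1, conicVar k 2} := by
  set I := Ideal.span {conicVar k 0, conicVar k 1, conicVar k 2} with hI
  obtain ⟨p, rfl⟩ := Ideal.Quotient.mk_surjective r
  induction p using MvPolynomial.induction_on with
  | C a =>
      have h1 : (Ideal.Quotient.mk (conicIdeal k)) (C a) = algebraMap k (ConicRing k) a := rfl
      rw [h1, ε.commutes, Algebra.algebraMap_self_apply, sub_self]
      exact I.zero_mem
  | add p q hp hq =>
      rw [map_add, map_add, map_add, ← sub_add_sub_comm]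
      exact I.add_mem hp hq
  | mul_X p i hp =>
      rw [map_mul, show (Ideal.Quotient.mk (conicIdeal k)) (X i) = conicVar k i from rfl,
        map_mul, hεi, mul_zero, map_zero, sub_zero]
      exact Ideal.mul_mem_left _ _ (Ideal.subset_span (by fin_cases i <;> simp))

end ConicAux

/-- Let `R = k[x,y,z]/(z² - xy)` over a field `k` of characteristic 0.
Then `Ω³_{R/k}` (the third exterior power of `Ω¹_{R/k}`, realized as a submodule of the
exterior algebra) is isomorphic to `k` as an `R`-module, where `R` acts on `k` through the
augmentation `ε : R → k` killing `x, y, z`, with generator `dx∧dy∧dz` mapping to `1`. -/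
theorem third_exterior_power_conic (k : Type) [Field k] [CharZero k] :
    letI dx := conicDVar k 0
    letI dy := conicDVar k 1
    letI dz := conicDVar k 2
    dx * dy * dz ∈ ⋀[ConicRing k]^3 (Ω[ConicRing k⁄k]) ∧
    ∀ ε : ConicRing k →ₐ[k] k,
      (ε (conicVar k 0) = 0 ∧ ε (conicVar k 1) = 0 ∧ ε (conicVar k 2) = 0) →
      ∃ e : (⋀[ConicRing k]^3 (Ω[ConicRing k⁄k])) ≃+ k,
        (∀ (r : ConicRing k) (m : ⋀[ConicRing k]^3 (Ω[ConicRing k⁄k])),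
          e (r • m) = ε r * e m) ∧
        ∀ w : ⋀[ConicRing k]^3 (Ω[ConicRing k⁄k]),
          (w : ExteriorAlgebra (ConicRing k) (Ω[ConicRing k⁄k])) = dx * dy * dz →
          e w = 1 := by
  refine ⟨mem_pow3 k, ?_⟩
  intro ε hε
  have hεi : ∀ i : Fin 3, ε (conicVar k i) = 0 := by
    intro i; fin_cases i; exacts [hε.1, hε.2.1, hε.2.2]
  obtain ⟨Φ, hΦs, hΦω⟩ := exists_functional k ε hε
  have hann : ∀ r ∈ Ideal.span {conicVar k 0, conicVar k 1, conicVar k 2},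
      r • (conicDVar k 0 * conicDVar k 1 * conicDVar k 2) = 0 := by
    intro r hr
    refine Submodule.span_induction ?_ ?_ ?_ ?_ hr
    · rintro x hx
      rcases hx with h | h | h <;> rw [h]
      exacts [ann k 0, ann k 1, ann k 2]
    · exact zero_smul (ConicRing k) (conicDVar k 0 * conicDVar k 1 * conicDVar k 2)
    · intro x y _ _ hx hy
      exact (add_smul x y (conicDVar k 0 * conicDVar k 1 * conicDVar k 2)).trans (by rw [hx, hy, add_zero])
    · intro c x _ hx
      exact (smul_assoc c x (conicDVar k 0 * conicDVar k 1 * conicDVar k 2)).trans (by rw [hx, smul_zero])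
  let E : (⋀[ConicRing k]^3 (Ω[ConicRing k⁄k])) →+ k :=
    AddMonoidHom.mk' (fun w => Φ (w : ExteriorAlgebra (ConicRing k) (Ω[ConicRing k⁄k])))
      (by intro x y; show Φ ((x + y : ⋀[ConicRing k]^3 (Ω[ConicRing k⁄k])) : ExteriorAlgebra (ConicRing k) (Ω[ConicRing k⁄k])) = _; rw [Submodule.coe_add, map_add])
  have hbij : Function.Bijective E := by
    constructor
    · rw [injective_iff_map_eq_zero]
      intro w hw
      obtain ⟨r, hr⟩ := Submodule.mem_span_singleton.1 (span3 k w.2)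
      have hΦw : Φ (w : ExteriorAlgebra (ConicRing k) (Ω[ConicRing k⁄k])) = ε r := by
        rw [← hr, hΦs, hΦω, mul_one]
      have hεr : ε r = 0 := by rw [← hΦw]; exact hw
      have hrI : r ∈ Ideal.span {conicVar k 0, conicVar k 1, conicVar k 2} := by
        have := eps_ker k ε hεi r
        rwa [hεr, map_zero, sub_zero] at this
      have : (w : ExteriorAlgebra (ConicRing k) (Ω[ConicRing k⁄k])) = 0 := by
        rw [← hr]; exact hann r hrI
      exact Subtype.ext this
    · intro c
      refine ⟨⟨algebraMap k (ConicRing k) c • (conicDVar k 0 * conicDVar k 1 * conicDVar k 2),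
        Submodule.smul_mem _ _ (mem_pow3 k)⟩, ?_⟩
      show Φ _ = c
      rw [hΦs, hΦω, mul_one, ε.commutes, Algebra.algebraMap_self_apply]
  refine ⟨AddEquiv.ofBijective E hbij, ?_, ?_⟩
  · intro r m
    show Φ ((r • m : ⋀[ConicRing k]^3 (Ω[ConicRing k⁄k])) :
      ExteriorAlgebra (ConicRing k) (Ω[ConicRing k⁄k])) = ε r * Φ _
    rw [Submodule.coe_smul, hΦs]
  · intro w hw
    show Φ _ = 1
    rw [hw, hΦω]
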